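/- Define L(a,σ,w) for positive parameters a₀,σ₀,w₀ and a,σ,w > 0 by L = P w² σ₀² w₀² (2a + P w²)/(4a₀(a + P w²)(a + a₀ + P w²)) − P² w⁴/(4(a + P w²)), where P = P(a,σ,w) = (√(a² + w²σ²) − a)/w². Then the set of critical points of L (i.e. points where the gradient of L vanishes) is exactly {(a₀, σ, w₀σ₀/σ) : σ > 0}. -/

import Mathlib

/-- Steady-state Kalman-Bucy filter variance. -/
noncomputable def Pst (a σ w : ℝ) : ℝ := (Real.sqrt (a ^ 2 + w ^ 2 * σ ^ 2) - a) / w ^ 2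

/-- Asymptotic incomplete-data log-likelihood of the linear-Gaussian model (Eq. 29). -/
noncomputable def Lfun (a₀ σ₀ w₀ a σ w : ℝ) : ℝ :=
  Pst a σ w * w ^ 2 * σ₀ ^ 2 * w₀ ^ 2 * (2 * a + Pst a σ w * w ^ 2) /
      (4 * a₀ * (a + Pst a σ w * w ^ 2) * (a + a₀ + Pst a σ w * w ^ 2)) -
    (Pst a σ w) ^ 2 * w ^ 4 / (4 * (a + Pst a σ w * w ^ 2))

lemma lfun_eq (a₀ σ₀ w₀ x y z : ℝ) (hz : z ≠ 0) :
    Lfun a₀ σ₀ w₀ x y z =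
      σ₀ ^ 2 * w₀ ^ 2 * (z ^ 2 * y ^ 2) /
          (4 * a₀ * Real.sqrt (x ^ 2 + z ^ 2 * y ^ 2) * (Real.sqrt (x ^ 2 + z ^ 2 * y ^ 2) + a₀)) -
        (Real.sqrt (x ^ 2 + z ^ 2 * y ^ 2) - x) ^ 2 / (4 * Real.sqrt (x ^ 2 + z ^ 2 * y ^ 2)) := by
  have hz2 : (z:ℝ) ^ 2 ≠ 0 := pow_ne_zero _ hz
  have hP : Pst x y z * z ^ 2 = Real.sqrt (x ^ 2 + z ^ 2 * y ^ 2) - x := by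
    rw [Pst, div_mul_cancel₀ _ hz2]
  have hP2 : (Pst x y z) ^ 2 * z ^ 4 = (Real.sqrt (x ^ 2 + z ^ 2 * y ^ 2) - x) ^ 2 := by
    rw [Pst, div_pow, show ((z:ℝ)^2)^2 = z^4 by ring, div_mul_cancel₀ _ (pow_ne_zero 4 hz)]
  set s := Real.sqrt (x ^ 2 + z ^ 2 * y ^ 2) with hs
  have hs2 : s ^ 2 = x ^ 2 + z ^ 2 * y ^ 2 := Real.sq_sqrt (by positivity)
  rw [Lfun, hP, hP2]
  have h1 : x + (s - x) = s := by ring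
  have h2 : x + a₀ + (s - x) = s + a₀ := by ring
  rw [h1, h2]
  have h3 : (s - x) * σ₀ ^ 2 * w₀ ^ 2 * (2 * x + (s - x)) = σ₀ ^ 2 * w₀ ^ 2 * (z ^ 2 * y ^ 2) := by
    have : (s - x) * σ₀ ^ 2 * w₀ ^ 2 * (2 * x + (s - x)) = σ₀ ^ 2 * w₀ ^ 2 * (s ^ 2 - x ^ 2) := by
      ring
    rw [this, hs2]; ring
  rw [h3]

lemma hasDerivAt_sqrt_comp {q : ℝ → ℝ} {q' t : ℝ} (hq : HasDerivAt q q' t) (h0 : q t ≠ 0) :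
    HasDerivAt (fun x => Real.sqrt (q x)) (q' / (2 * Real.sqrt (q t))) t := by
  have h := (Real.hasDerivAt_sqrt h0).comp t hq
  refine h.congr_deriv ?_
  ring


/-- The set of critical points of the asymptotic likelihood `L` in the positive octant
is exactly `{(a₀, σ, w₀σ₀/σ) : σ > 0}`, i.e. the gradient vanishes iff `a = a₀` and
`w·σ = w₀·σ₀`. -/
theorem stmt4 (a₀ σ₀ w₀ : ℝ) (ha₀ : 0 < a₀) (hσ₀ : 0 < σ₀) (hw₀ : 0 < w₀)
    (a σ w : ℝ) (ha : 0 < a) (hσ : 0 < σ) (hw : 0 < w) :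
    fderiv ℝ (fun p : ℝ × ℝ × ℝ => Lfun a₀ σ₀ w₀ p.1 p.2.1 p.2.2) (a, σ, w) = 0 ↔
      (a = a₀ ∧ w * σ = w₀ * σ₀) := by
  set C : ℝ := σ₀ ^ 2 * w₀ ^ 2 with hCdef
  have hC : 0 < C := by positivity
  set F : ℝ × ℝ × ℝ → ℝ := fun p =>
    C * (p.2.2 ^ 2 * p.2.1 ^ 2) /
        (4 * a₀ * Real.sqrt (p.1 ^ 2 + p.2.2 ^ 2 * p.2.1 ^ 2) *
          (Real.sqrt (p.1 ^ 2 + p.2.2 ^ 2 * p.2.1 ^ 2) + a₀)) -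
      (Real.sqrt (p.1 ^ 2 + p.2.2 ^ 2 * p.2.1 ^ 2) - p.1) ^ 2 /
        (4 * Real.sqrt (p.1 ^ 2 + p.2.2 ^ 2 * p.2.1 ^ 2)) with hFdef
  -- eventual equality
  have hopen : {p : ℝ × ℝ × ℝ | 0 < p.2.2} ∈ nhds ((a, σ, w) : ℝ × ℝ × ℝ) := by
    have : IsOpen {p : ℝ × ℝ × ℝ | 0 < p.2.2} :=
      isOpen_lt continuous_const (continuous_snd.comp continuous_snd)
    exact this.mem_nhds (by simpa using hw)
  have heq : (fun p : ℝ × ℝ × ℝ => Lfun a₀ σ₀ w₀ p.1 p.2.1 p.2.2) =ᶠ[nhds ((a, σ, w) : ℝ × ℝ × ℝ)] F := by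
    filter_upwards [hopen] with p hp
    exact lfun_eq a₀ σ₀ w₀ p.1 p.2.1 p.2.2 (ne_of_gt hp)
  rw [heq.fderiv_eq]
  -- basic quantities
  set c : ℝ := w ^ 2 * σ ^ 2 with hcdef
  have hc : 0 < c := by positivity
  set s : ℝ := Real.sqrt (a ^ 2 + w ^ 2 * σ ^ 2) with hsdef
  have hs2 : s ^ 2 = a ^ 2 + c := Real.sq_sqrt (by positivity)
  have hs0 : 0 < s := Real.sqrt_pos.2 (by positivity)
  have hsa : a < s := by nlinarith
  have hsne : s ≠ 0 := ne_of_gt hs0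
  have hsa₀ : (0:ℝ) < s + a₀ := by linarith
  have hden1 : 4 * a₀ * s * (s + a₀) ≠ 0 := by positivity
  have hden2 : 4 * s ≠ 0 := by positivity
  -- differentiability of F at the point
  have hargdiff : DifferentiableAt ℝ (fun p : ℝ × ℝ × ℝ => p.1 ^ 2 + p.2.2 ^ 2 * p.2.1 ^ 2)
      (a, σ, w) := by fun_prop
  have hargne : (a ^ 2 + w ^ 2 * σ ^ 2 : ℝ) ≠ 0 := by positivity
  have hsqrtdiff : DifferentiableAt ℝ
      (fun p : ℝ × ℝ × ℝ => Real.sqrt (p.1 ^ 2 + p.2.2 ^ 2 * p.2.1 ^ 2)) (a, σ, w) :=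
    hargdiff.sqrt hargne
  have hFdiff : DifferentiableAt ℝ F (a, σ, w) := by
    rw [hFdef]
    simp only [div_eq_mul_inv]
    apply DifferentiableAt.sub
    · apply DifferentiableAt.mul
      · fun_prop
      · exact DifferentiableAt.inv
          (((differentiableAt_const _).mul hsqrtdiff).mul (hsqrtdiff.add_const a₀)) hden1
    · apply DifferentiableAt.mul
      · exact (hsqrtdiff.sub differentiableAt_fst).pow 2
      · exact DifferentiableAt.inv ((differentiableAt_const _).mul hsqrtdiff) hden2
  have hFD := hFdiff.hasFDerivAt
  -- curves
  have hγ1 : HasDerivAt (fun t : ℝ => ((t, σ, w) : ℝ × ℝ × ℝ)) (1, 0, 0) a :=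
    (hasDerivAt_id a).prodMk ((hasDerivAt_const a σ).prodMk (hasDerivAt_const a w))
  have hγ2 : HasDerivAt (fun t : ℝ => ((a, t, w) : ℝ × ℝ × ℝ)) (0, 1, 0) σ :=
    (hasDerivAt_const σ a).prodMk ((hasDerivAt_id σ).prodMk (hasDerivAt_const σ w))
  have hγ3 : HasDerivAt (fun t : ℝ => ((a, σ, t) : ℝ × ℝ × ℝ)) (0, 0, 1) w :=
    (hasDerivAt_const w a).prodMk ((hasDerivAt_const w σ).prodMk (hasDerivAt_id w))
  have hcomp1 : HasDerivAt (fun t : ℝ => F (t, σ, w)) (fderiv ℝ F (a, σ, w) (1, 0, 0)) a :=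
    by have := hFD.comp_hasDerivAt a hγ1; exact this
  have hcomp2 : HasDerivAt (fun t : ℝ => F (a, t, w)) (fderiv ℝ F (a, σ, w) (0, 1, 0)) σ :=
    by have := hFD.comp_hasDerivAt σ hγ2; exact this
  have hcomp3 : HasDerivAt (fun t : ℝ => F (a, σ, t)) (fderiv ℝ F (a, σ, w) (0, 0, 1)) w :=
    by have := hFD.comp_hasDerivAt w hγ3; exact this
  -- one-variable derivatives, clean closed forms
  set DA : ℝ := (a₀ * (s + a₀) ^ 2 * (s - a) ^ 2 * (2 * s + a) - C * c * a * (2 * s + a₀)) /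
      (4 * a₀ * s ^ 3 * (s + a₀) ^ 2) with hDAdef
  set DS : ℝ := w ^ 2 * σ * (C * (2 * s ^ 2 * (s + a₀) - c * (2 * s + a₀)) -
      a₀ * (s + a₀) ^ 2 * (s - a) * (s + a)) / (4 * a₀ * s ^ 3 * (s + a₀) ^ 2) with hDSdef
  set DW : ℝ := σ ^ 2 * w * (C * (2 * s ^ 2 * (s + a₀) - c * (2 * s + a₀)) -
      a₀ * (s + a₀) ^ 2 * (s - a) * (s + a)) / (4 * a₀ * s ^ 3 * (s + a₀) ^ 2) with hDWdef
  -- derivative in a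
  have hq1 : HasDerivAt (fun t : ℝ => t ^ 2 + w ^ 2 * σ ^ 2) (2 * a) a := by
    simpa using (hasDerivAt_pow 2 a).add_const (w ^ 2 * σ ^ 2)
  have hS1 : HasDerivAt (fun t : ℝ => Real.sqrt (t ^ 2 + w ^ 2 * σ ^ 2)) (2 * a / (2 * s)) a :=
    hq1.sqrt hargne
  have hA : HasDerivAt (fun t : ℝ => F (t, σ, w)) DA a := by
    have hd1 := (hS1.const_mul (4 * a₀)).mul (hS1.add_const a₀)
    have hfirst := (hasDerivAt_const a (C * (w ^ 2 * σ ^ 2))).div hd1 hden1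
    have hu := hS1.sub (hasDerivAt_id a)
    have hsecond := (hu.pow 2).div (hS1.const_mul 4) hden2
    have hAr := hfirst.sub hsecond
    refine hAr.congr_deriv ?_
    rw [hDAdef, hcdef]
    simp only [Pi.mul_apply, Pi.sub_apply, Pi.pow_apply, Pi.div_apply, id, ← hsdef]
    field_simp
    ring
  -- derivative in σ
  have hq2 : HasDerivAt (fun t : ℝ => a ^ 2 + w ^ 2 * t ^ 2) (w ^ 2 * (2 * σ)) σ := by
    simpa using ((hasDerivAt_pow 2 σ).const_mul (w ^ 2)).const_add (a ^ 2)
  have hS2 : HasDerivAt (fun t : ℝ => Real.sqrt (a ^ 2 + w ^ 2 * t ^ 2))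
      (w ^ 2 * (2 * σ) / (2 * s)) σ := hq2.sqrt hargne
  have hS : HasDerivAt (fun t : ℝ => F (a, t, w)) DS σ := by
    have hnum : HasDerivAt (fun t : ℝ => C * (w ^ 2 * t ^ 2)) (C * (w ^ 2 * (2 * σ))) σ := by
      simpa using ((hasDerivAt_pow 2 σ).const_mul (w ^ 2)).const_mul C
    have hd1 := (hS2.const_mul (4 * a₀)).mul (hS2.add_const a₀)
    have hfirst := hnum.div hd1 hden1
    have hsecond := ((hS2.sub_const a).pow 2).div (hS2.const_mul 4) hden2
    have hSr := hfirst.sub hsecond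
    refine hSr.congr_deriv ?_
    rw [hDSdef, hcdef]
    simp only [Pi.mul_apply, Pi.sub_apply, Pi.pow_apply, Pi.div_apply, id, ← hsdef]
    field_simp
    ring
  -- derivative in w
  have hq3 : HasDerivAt (fun t : ℝ => a ^ 2 + t ^ 2 * σ ^ 2) (2 * w * σ ^ 2) w := by
    simpa using ((hasDerivAt_pow 2 w).mul_const (σ ^ 2)).const_add (a ^ 2)
  have hS3 : HasDerivAt (fun t : ℝ => Real.sqrt (a ^ 2 + t ^ 2 * σ ^ 2))
      (2 * w * σ ^ 2 / (2 * s)) w := hq3.sqrt hargne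
  have hW : HasDerivAt (fun t : ℝ => F (a, σ, t)) DW w := by
    have hnum : HasDerivAt (fun t : ℝ => C * (t ^ 2 * σ ^ 2)) (C * (2 * w * σ ^ 2)) w := by
      simpa using ((hasDerivAt_pow 2 w).mul_const (σ ^ 2)).const_mul C
    have hd1 := (hS3.const_mul (4 * a₀)).mul (hS3.add_const a₀)
    have hfirst := hnum.div hd1 hden1
    have hsecond := ((hS3.sub_const a).pow 2).div (hS3.const_mul 4) hden2
    have hWr := hfirst.sub hsecond
    refine hWr.congr_deriv ?_
    rw [hDWdef, hcdef]
    simp only [Pi.mul_apply, Pi.sub_apply, Pi.pow_apply, Pi.div_apply, id, ← hsdef]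
    field_simp
    ring
  have e1val : fderiv ℝ F (a, σ, w) (1, 0, 0) = DA := hcomp1.unique hA
  have e2val : fderiv ℝ F (a, σ, w) (0, 1, 0) = DS := hcomp2.unique hS
  have e3val : fderiv ℝ F (a, σ, w) (0, 0, 1) = DW := hcomp3.unique hW
  have hD0 : (4 * a₀ * s ^ 3 * (s + a₀) ^ 2 : ℝ) ≠ 0 := by positivity
  have hc2 : c = s ^ 2 - a ^ 2 := by linarith
  constructor
  · intro h0
    have h1 : DA = 0 := by rw [← e1val, h0]; simp
    have h2 : DS = 0 := by rw [← e2val, h0]; simp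
    rw [hDAdef, div_eq_zero_iff] at h1
    have hEa : a₀ * (s + a₀) ^ 2 * (s - a) ^ 2 * (2 * s + a) - C * c * a * (2 * s + a₀) = 0 :=
      h1.resolve_right hD0
    rw [hDSdef, div_eq_zero_iff] at h2
    have h2' := h2.resolve_right hD0
    have hws : (w ^ 2 * σ : ℝ) ≠ 0 := by positivity
    have hEσ : C * (2 * s ^ 2 * (s + a₀) - c * (2 * s + a₀)) -
        a₀ * (s + a₀) ^ 2 * (s - a) * (s + a) = 0 := by
      rcases mul_eq_zero.mp h2' with h | h
      · exact absurd h hws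
      · exact h
    rw [hc2] at hEa hEσ
    have key : (a₀ - a) * (2 * s ^ 3 * a₀ * (s - a) ^ 2 * (s + a₀) ^ 2) = 0 := by
      linear_combination (a₀ * (s ^ 2 + a ^ 2) + 2 * a ^ 2 * s) * hEa +
        (a * (s ^ 2 - a ^ 2) * (2 * s + a₀)) * hEσ
    have hfacpos : (0:ℝ) < 2 * s ^ 3 * a₀ * (s - a) ^ 2 * (s + a₀) ^ 2 := by
      have : (0:ℝ) < s - a := by linarith
      positivity
    have haa : a = a₀ := by
      rcases mul_eq_zero.mp key with h | h
      · linarith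
      · exact absurd h (ne_of_gt hfacpos)
    refine ⟨haa, ?_⟩
    have hCc : (C - (s ^ 2 - a₀ ^ 2)) * (a₀ * (s + a₀) ^ 2) = 0 := by
      rw [haa] at hEσ
      linear_combination hEσ
    have hCc2 : C = s ^ 2 - a₀ ^ 2 := by
      rcases mul_eq_zero.mp hCc with h | h
      · linarith
      · exfalso; revert h; positivity
    have hcC : C = c := by rw [hCc2, hc2, haa]
    have hfac : (w * σ - w₀ * σ₀) * (w * σ + w₀ * σ₀) = 0 := by
      rw [hCdef, hcdef] at hcC
      linear_combination -hcC
    rcases mul_eq_zero.mp hfac with h | h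
    · linarith
    · exfalso
      have : (0:ℝ) < w * σ + w₀ * σ₀ := by positivity
      linarith
  · rintro ⟨haa, hws⟩
    have hcC : C = c := by
      rw [hCdef, hcdef]
      linear_combination (w * σ + w₀ * σ₀) * hws.symm
    have hDA0 : DA = 0 := by
      rw [hDAdef, div_eq_zero_iff]
      left
      rw [hcC, hc2, haa]
      ring
    have hbr : C * (2 * s ^ 2 * (s + a₀) - c * (2 * s + a₀)) -
        a₀ * (s + a₀) ^ 2 * (s - a) * (s + a) = 0 := by
      rw [hcC, hc2, haa]
      ring
    have hDS0 : DS = 0 := by rw [hDSdef, hbr]; simp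
    have hDW0 : DW = 0 := by rw [hDWdef, hbr]; simp
    apply ContinuousLinearMap.ext
    intro v
    have hv : v = v.1 • ((1:ℝ), (0:ℝ), (0:ℝ)) + v.2.1 • ((0:ℝ), (1:ℝ), (0:ℝ)) +
        v.2.2 • ((0:ℝ), (0:ℝ), (1:ℝ)) := by
      refine Prod.ext ?_ (Prod.ext ?_ ?_) <;> simp
    rw [hv]
    simp only [map_add, map_smul, e1val, e2val, e3val, hDA0, hDS0, hDW0, smul_zero, add_zero,
      ContinuousLinearMap.zero_apply]
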